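/- arXiv:1307.0909 — 4 statements merged into one kernel-verified Lean document; each statement's English description precedes it below -/
import Mathlib

section
/- If ψ and ω are regular sequences on [n] = {1, …, n} and ψ_{{1,2}} = ω_{{1,2}}, then ψ = ω. -/
noncomputable section

/-- Two words (over possibly different ordered alphabets) are order equivalent:
same length, and letters in corresponding positions compare the same way. -/
def OrdEquiv {α β : Type*} [LT α] [LT β] (u : List α) (v : List β) : Prop :=
  ∃ h : u.length = v.length, ∀ s t : Fin u.length,
    (u.get s < u.get t ↔ v.get (Fin.cast h s) < v.get (Fin.cast h t))

/-- A regular sequence on `[n] = {1, …, n}`: a word on `[n]` (with `n ≥ 3`) whose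
restrictions to any two 2-element subsets of `[n]` are order equivalent. -/
def IsRegularSeq (n : ℕ) (w : List ℕ) : Prop :=
  3 ≤ n ∧ (∀ x ∈ w, x ∈ Finset.Icc 1 n) ∧
    ∀ X Y : Finset ℕ, X ⊆ Finset.Icc 1 n → Y ⊆ Finset.Icc 1 n → X.card = 2 → Y.card = 2 →
      OrdEquiv (w.filter (· ∈ X)) (w.filter (· ∈ Y))

/-- Balanced words on the two-letter ordered alphabet `{a ≺ b}`: concatenations of
balanced blocks `a^r b^r` and `b^r a^r` with `r ≥ 1`. -/
inductive BalancedOn {α : Type*} (a b : α) : List α → Prop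
  | nil : BalancedOn a b []
  | lo (r : ℕ) (w : List α) (hr : 0 < r) (hw : BalancedOn a b w) :
      BalancedOn a b (List.replicate r a ++ List.replicate r b ++ w)
  | hi (r : ℕ) (w : List α) (hr : 0 < r) (hw : BalancedOn a b w) :
      BalancedOn a b (List.replicate r b ++ List.replicate r a ++ w)

/-- `HasBlockSizes a b w s`: the word `w` factors into balanced blocks on `{a ≺ b}`
whose sizes are given, in order, by the list `s`. -/
inductive HasBlockSizes {α : Type*} (a b : α) : List α → List ℕ → Prop
  | nil : HasBlockSizes a b [] []
  | lo (r : ℕ) (w : List α) (s : List ℕ) (hr : 0 < r) (hw : HasBlockSizes a b w s) :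
      HasBlockSizes a b (List.replicate r a ++ List.replicate r b ++ w) (r :: s)
  | hi (r : ℕ) (w : List α) (s : List ℕ) (hr : 0 < r) (hw : HasBlockSizes a b w s) :
      HasBlockSizes a b (List.replicate r b ++ List.replicate r a ++ w) (r :: s)

/-- The exponent sequence of the letter `u` in a word: the list of lengths of the
maximal runs of consecutive `u`'s. -/
def expSeq {α : Type*} [DecidableEq α] (u : α) : List α → List ℕ
  | [] => []
  | x :: xs =>
      let s := expSeq u xs
      if x = u then
        match xs with
        | [] => [1]
        | y :: _ => if y = u then (s.headD 0 + 1) :: s.tail else 1 :: s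
      else s

/-- `Refines s t`: the sequence `s` is a refinement of `t`, i.e. `s` splits into
consecutive nonempty groups whose sums are the entries of `t`. -/
inductive Refines : List ℕ → List ℕ → Prop
  | nil : Refines [] []
  | cons (g s t : List ℕ) (hg : g ≠ []) (h : Refines s t) :
      Refines (g ++ s) (g.sum :: t)

/-- `IsOccPos w u i p`: the (1-based) position of the `i`-th occurrence of the letter
`u` in `w` is `p` (that is, `|w(u,i)| = p`). -/
def IsOccPos {α : Type*} [DecidableEq α] (w : List α) (u : α) (i p : ℕ) : Prop :=
  1 ≤ p ∧ p ≤ w.length ∧ w.getD (p - 1) u = u ∧ (w.take p).count u = i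

lemma ordEquiv_refl (w : List ℕ) : OrdEquiv w w := ⟨rfl, fun _ _ => Iff.rfl⟩

lemma ordEquiv_symm {w w' : List ℕ} (h : OrdEquiv w w') : OrdEquiv w' w := by
  obtain ⟨hl, hc⟩ := h
  exact ⟨hl.symm, fun s t => (hc (Fin.cast hl.symm s) (Fin.cast hl.symm t)).symm⟩

lemma ordEquiv_trans {a b c : List ℕ} (h1 : OrdEquiv a b) (h2 : OrdEquiv b c) :
    OrdEquiv a c :=
  ⟨h1.1.trans h2.1, fun s t =>
    (h1.2 s t).trans (h2.2 (Fin.cast h1.1 s) (Fin.cast h1.1 t))⟩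

lemma ordEquiv_two {u v : ℕ} (huv : u < v) {w w' : List ℕ}
    (hw : ∀ x ∈ w, x = u ∨ x = v) (hw' : ∀ x ∈ w', x = u ∨ x = v)
    (hu : u ∈ w) (hv : v ∈ w) (h : OrdEquiv w w') : w = w' := by
  obtain ⟨hlen, hcmp⟩ := h
  obtain ⟨s0, hs0⟩ := List.mem_iff_get.mp hu
  obtain ⟨t0, ht0⟩ := List.mem_iff_get.mp hv
  apply List.ext_get hlen
  intro i h1 h2
  rcases hw (w.get ⟨i, h1⟩) (List.get_mem _ _) with hx | hx
  · have hlt : w.get ⟨i, h1⟩ < w.get t0 := by rw [hx, ht0]; exact huv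
    have hlt' := (hcmp ⟨i, h1⟩ t0).mp hlt
    rcases hw' (w'.get (Fin.cast hlen ⟨i, h1⟩)) (List.get_mem _ _) with h' | h'
    · exact hx.trans h'.symm
    · exfalso
      rcases hw' (w'.get (Fin.cast hlen t0)) (List.get_mem _ _) with h'' | h'' <;>
        rw [h', h''] at hlt' <;> omega
  · have hlt : w.get s0 < w.get ⟨i, h1⟩ := by rw [hx, hs0]; exact huv
    have hlt' := (hcmp s0 ⟨i, h1⟩).mp hlt
    rcases hw' (w'.get (Fin.cast hlen ⟨i, h1⟩)) (List.get_mem _ _) with h' | h'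
    · exfalso
      rcases hw' (w'.get (Fin.cast hlen s0)) (List.get_mem _ _) with h'' | h'' <;>
        rw [h', h''] at hlt' <;> omega
    · exact hx.trans h'.symm

lemma len_filter_pair {u v : ℕ} (huv : u ≠ v) (w : List ℕ) :
    (w.filter (· ∈ ({u, v} : Finset ℕ))).length = w.count u + w.count v := by
  induction w with
  | nil => simp
  | cons a w ih =>
    by_cases h1 : a = u <;> by_cases h2 : a = v <;>
      simp [List.filter_cons, List.count_cons, h1, h2, huv, huv.symm] at ih ⊢ <;> omega

lemma count_filter_pair (u v : ℕ) (w : List ℕ) :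
    (w.filter (· ∈ ({u, v} : Finset ℕ))).count u = w.count u := by
  induction w with
  | nil => rfl
  | cons a w ih =>
    by_cases h1 : a = u <;> by_cases h2 : a = v <;>
      simp [List.filter_cons, List.count_cons, h1, h2] at ih ⊢ <;> omega

lemma pair_subset_Icc {u v n : ℕ} (hu : u ∈ Finset.Icc 1 n) (hv : v ∈ Finset.Icc 1 n) :
    ({u, v} : Finset ℕ) ⊆ Finset.Icc 1 n := by
  intro x hx
  simp only [Finset.mem_insert, Finset.mem_singleton] at hx
  rcases hx with rfl | rfl <;> assumption

lemma counts_eq {n : ℕ} {w : List ℕ} (h : IsRegularSeq n w) {u v : ℕ}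
    (hu : u ∈ Finset.Icc 1 n) (hv : v ∈ Finset.Icc 1 n) : w.count u = w.count v := by
  rcases eq_or_ne u v with rfl | huv
  · rfl
  have hn := h.1
  rw [Finset.mem_Icc] at hu hv
  obtain ⟨z, hz1, hzn, hzu, hzv⟩ : ∃ z, 1 ≤ z ∧ z ≤ n ∧ z ≠ u ∧ z ≠ v := by
    refine ⟨if u ≠ 1 ∧ v ≠ 1 then 1 else if u ≠ 2 ∧ v ≠ 2 then 2 else 3, ?_, ?_, ?_, ?_⟩ <;>
      split_ifs <;> omega
  have hzI : z ∈ Finset.Icc 1 n := Finset.mem_Icc.mpr ⟨hz1, hzn⟩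
  have huI : u ∈ Finset.Icc 1 n := Finset.mem_Icc.mpr hu
  have hvI : v ∈ Finset.Icc 1 n := Finset.mem_Icc.mpr hv
  obtain ⟨hlen, -⟩ := h.2.2 {u, z} {v, z} (pair_subset_Icc huI hzI) (pair_subset_Icc hvI hzI)
    (Finset.card_pair hzu.symm) (Finset.card_pair hzv.symm)
  rw [len_filter_pair hzu.symm, len_filter_pair hzv.symm] at hlen
  omega

lemma exists_other {n b : ℕ} (hn : 2 ≤ n) :
    ∃ v, v ∈ Finset.Icc 1 n ∧ v ≠ b := by
  refine ⟨if b = 1 then 2 else 1, ?_, ?_⟩ <;> split_ifs <;> simp [Finset.mem_Icc] <;> omega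

lemma reconstruct {n : ℕ} (hn : 2 ≤ n) :
    ∀ ψ ω : List ℕ, (∀ x ∈ ψ, x ∈ Finset.Icc 1 n) → (∀ x ∈ ω, x ∈ Finset.Icc 1 n) →
    (∀ u v : ℕ, u ∈ Finset.Icc 1 n → v ∈ Finset.Icc 1 n → u ≠ v →
      ψ.filter (· ∈ ({u, v} : Finset ℕ)) = ω.filter (· ∈ ({u, v} : Finset ℕ))) →
    ψ = ω := by
  intro ψ
  induction ψ with
  | nil =>
    intro ω _ hωm hf
    cases ω with
    | nil => rfl
    | cons b ω' =>
      exfalso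
      have hbI := hωm b (by simp)
      obtain ⟨v, hvI, hvb⟩ := exists_other (b := b) hn
      have := hf b v hbI hvI (Ne.symm hvb)
      have hb : b ∈ ({b, v} : Finset ℕ) := by simp
      simp [List.filter_cons, hb] at this
  | cons a ψ' ih =>
    intro ω hψm hωm hf
    cases ω with
    | nil =>
      exfalso
      have haI := hψm a (by simp)
      obtain ⟨v, hvI, hva⟩ := exists_other (b := a) hn
      have := hf a v haI hvI (Ne.symm hva)
      have ha : a ∈ ({a, v} : Finset ℕ) := by simp
      simp [List.filter_cons, ha] at this
    | cons b ω' =>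
      have haI := hψm a (by simp)
      have hbI := hωm b (by simp)
      have hab : a = b := by
        by_cases hab : a = b
        · exact hab
        · have := hf a b haI hbI hab
          have ha : a ∈ ({a, b} : Finset ℕ) := by simp
          have hb : b ∈ ({a, b} : Finset ℕ) := by simp
          simp [List.filter_cons, ha, hb] at this
          exact this.1
      subst hab
      have htail : ψ' = ω' := by
        apply ih ω' (fun x hx => hψm x (by simp [hx])) (fun x hx => hωm x (by simp [hx]))
        intro u v hu hv huv
        have := hf u v hu hv huv
        by_cases ha : a ∈ ({u, v} : Finset ℕ)
        · simp only [List.filter_cons, ha] at this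
          simpa using this
        · simpa only [List.filter_cons, ha, decide_false, Bool.false_eq_true, ↓reduceIte] using this
      rw [htail]

/-- **Lemma.** A regular sequence on `[n]` is determined by its restriction
to `{1, 2}`. -/
theorem regularSeq_ext (n : ℕ) (ψ ω : List ℕ)
    (hψ : IsRegularSeq n ψ) (hω : IsRegularSeq n ω)
    (h : ψ.filter (· ∈ ({1, 2} : Finset ℕ)) = ω.filter (· ∈ ({1, 2} : Finset ℕ))) :
    ψ = ω := by
  have hn := hψ.1
  have h1I : (1 : ℕ) ∈ Finset.Icc 1 n := Finset.mem_Icc.mpr ⟨le_refl 1, by omega⟩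
  have h2I : (2 : ℕ) ∈ Finset.Icc 1 n := Finset.mem_Icc.mpr ⟨by omega, by omega⟩
  -- counts agree
  have hc1 : ψ.count 1 = ω.count 1 := by
    have := congrArg (List.count 1) h
    rwa [count_filter_pair, count_filter_pair] at this
  have hcount : ∀ x ∈ Finset.Icc 1 n, ψ.count x = ω.count x := by
    intro x hx
    calc ψ.count x = ψ.count 1 := counts_eq hψ hx h1I
    _ = ω.count 1 := hc1
    _ = ω.count x := counts_eq hω h1I hx
  -- key: all pairwise restrictions agree
  have key0 : ∀ u v : ℕ, u ∈ Finset.Icc 1 n → v ∈ Finset.Icc 1 n → u < v →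
      ψ.filter (· ∈ ({u, v} : Finset ℕ)) = ω.filter (· ∈ ({u, v} : Finset ℕ)) := by
    intro u v hu hv huv
    rcases eq_or_ne ψ [] with rfl | hne
    · -- ψ = [] forces ω = []
      have : ω = [] := by
        cases ω with
        | nil => rfl
        | cons b ω' =>
          exfalso
          have hbI := hω.2.1 b (by simp)
          have := hcount b hbI
          simp at this
      rw [this]
    · -- ψ nonempty: every letter in [1,n] occurs in ψ
      obtain ⟨a, ha⟩ := List.exists_mem_of_ne_nil ψ hne
      have haI : a ∈ Finset.Icc 1 n := hψ.2.1 a ha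
      have hpos : ∀ x ∈ Finset.Icc 1 n, 0 < ψ.count x := by
        intro x hx
        have h1 := counts_eq hψ hx haI
        have h2 : 0 < ψ.count a := List.count_pos_iff.mpr ha
        omega
      have huψ : u ∈ ψ := List.count_pos_iff.mp (hpos u hu)
      have hvψ : v ∈ ψ := List.count_pos_iff.mp (hpos v hv)
      have huv' : u ≠ v := Nat.ne_of_lt huv
      have h12 : ({1, 2} : Finset ℕ) ⊆ Finset.Icc 1 n := pair_subset_Icc h1I h2I
      have c12 : ({1, 2} : Finset ℕ).card = 2 := Finset.card_pair (by omega)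
      have cuv : ({u, v} : Finset ℕ).card = 2 := Finset.card_pair huv'
      have huvI := pair_subset_Icc hu hv
      have e1 : OrdEquiv (ψ.filter (· ∈ ({u, v} : Finset ℕ)))
          (ψ.filter (· ∈ ({1, 2} : Finset ℕ))) := hψ.2.2 _ _ huvI h12 cuv c12
      have e2 : OrdEquiv (ω.filter (· ∈ ({1, 2} : Finset ℕ)))
          (ω.filter (· ∈ ({u, v} : Finset ℕ))) := hω.2.2 _ _ h12 huvI c12 cuv
      have e : OrdEquiv (ψ.filter (· ∈ ({u, v} : Finset ℕ)))
          (ω.filter (· ∈ ({u, v} : Finset ℕ))) :=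
        ordEquiv_trans e1 (by rw [h]; exact e2)
      apply ordEquiv_two huv _ _ _ _ e
      · intro x hx
        have := List.of_mem_filter hx
        simpa using this
      · intro x hx
        have := List.of_mem_filter hx
        simpa using this
      · exact List.mem_filter.mpr ⟨huψ, by simp⟩
      · exact List.mem_filter.mpr ⟨hvψ, by simp⟩
  have key : ∀ u v : ℕ, u ∈ Finset.Icc 1 n → v ∈ Finset.Icc 1 n → u ≠ v →
      ψ.filter (· ∈ ({u, v} : Finset ℕ)) = ω.filter (· ∈ ({u, v} : Finset ℕ)) := by
    intro u v hu hv huv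
    rcases Nat.lt_or_ge u v with hlt | hge
    · exact key0 u v hu hv hlt
    · have hlt : v < u := by omega
      rw [Finset.pair_comm u v]
      exact key0 v u hv hu hlt
  exact reconstruct (by omega) ψ ω hψ.2.1 hω.2.1 key

end
end

section
/- A word ω on the ordered alphabet {a, b} (with a ≺ b) is balanced if and only if the following hold: (i) ω contains the same number of occurrences of a as of b; (ii) whenever the position immediately after the i-th occurrence of a is the position of the (j+1)-th occurrence of b (i.e. |ω(a,i)| + 1 = |ω(b,j+1)|), then i ≥ j; (iii) whenever the position immediately after the i-th occurrence of b is the position of the (j+1)-th occurrence of a (i.e. |ω(b,i)| + 1 = |ω(a,j+1)|), then i ≥ j. -/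
noncomputable section

section Aux
open List

/-- Boundary condition. -/
def Cond (x : Bool) (w : List Bool) : Prop :=
  ∀ k, (h : k + 1 < w.length) → w[k]'(Nat.lt_of_succ_lt h) = x → w[k+1]'h = !x →
    (w.take (k+1)).count (!x) ≤ (w.take (k+1)).count x

lemma gidx {α : Type*} (l : List α) {i j : ℕ} (hij : i = j) {hi : i < l.length} :
    l[i]'hi = l[j]'(hij ▸ hi) := by subst hij; rfl

lemma count_take_succ (w : List Bool) (u : Bool) (p : ℕ) (hp : p < w.length) :
    (w.take (p+1)).count u = (w.take p).count u + if w[p] = u then 1 else 0 := by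
  rw [take_succ, count_append, getElem?_eq_getElem hp]
  by_cases h : w[p] = u <;> simp [h, count_singleton']

lemma count_block (c u : Bool) (r : ℕ) :
    (replicate r c ++ replicate r (!c)).count u = r := by
  cases c <;> cases u <;> simp [count_replicate]

lemma count_block_take (c u : Bool) (r m : ℕ) :
    ((replicate r c ++ replicate r (!c)).take m).count u
      = (if u = c then min m r else min (m - r) r) := by
  rw [take_append, take_replicate, take_replicate, count_append]
  simp only [length_replicate]
  cases c <;> cases u <;> simp [count_replicate]

lemma getElem_block (c : Bool) (r k : ℕ) (h : k < (replicate r c ++ replicate r (!c)).length) :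
    (replicate r c ++ replicate r (!c))[k] = if k < r then c else !c := by
  simp only [length_append, length_replicate] at h
  by_cases hk : k < r
  · rw [if_pos hk, getElem_append_left (by simpa using hk)]
    exact getElem_replicate ..
  · rw [if_neg hk, getElem_append_right (by simp; omega)]
    exact getElem_replicate ..

lemma cond_cons_block (x c : Bool) (r : ℕ) (w : List Bool) (h : Cond x w) :
    Cond x (replicate r c ++ replicate r (!c) ++ w) := by
  intro k hk h1 h2
  set B := replicate r c ++ replicate r (!c) with hBdef
  have hB : B.length = 2*r := by simp [hBdef]; omega
  rcases lt_trichotomy (k+1) (2*r) with hlt | heq | hgt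
  · -- both letters inside block
    have hk1 : k < B.length := by omega
    have hk2 : k + 1 < B.length := by omega
    rw [getElem_append_left hk1] at h1
    rw [getElem_append_left hk2] at h2
    rw [getElem_block] at h1 h2
    have htake : (B ++ w).take (k+1) = B.take (k+1) := by
      rw [take_append]
      have : k + 1 - B.length = 0 := by omega
      rw [this, take_zero, append_nil]
    rw [htake, hBdef, count_block_take, count_block_take]
    by_cases hkr : k < r
    · -- x = c
      rw [if_pos hkr] at h1
      subst h1
      rw [if_pos rfl, if_neg (by cases c <;> simp)]
      omega
    · -- contradiction: w[k] = !c = x and w[k+1] = !c = !x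
      exfalso
      rw [if_neg hkr] at h1
      rw [if_neg (by omega)] at h2
      rw [← h1] at h2
      simp at h2
  · -- k+1 = 2r : junction, counts are r = r
    have htake : (B ++ w).take (k+1) = B := by
      rw [take_append, take_of_length_le (by omega)]
      have : k + 1 - B.length = 0 := by omega
      rw [this, take_zero, append_nil]
    rw [htake, hBdef, count_block, count_block]
  · -- both letters inside w
    have hkB : B.length ≤ k := by omega
    have hkB1 : B.length ≤ k + 1 := by omega
    rw [getElem_append_right hkB] at h1
    rw [getElem_append_right hkB1] at h2
    have hlt' : (k - 2*r) + 1 < w.length := by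
      simp only [length_append] at hk; omega
    rw [gidx w (show k - B.length = k - 2*r by omega)] at h1
    rw [gidx w (show k + 1 - B.length = (k - 2*r) + 1 by omega)] at h2
    have := h (k - 2*r) hlt' h1 h2
    have htake : (B ++ w).take (k+1) = B ++ w.take (k - 2*r + 1) := by
      rw [take_append, take_of_length_le (by omega)]
      congr 2; omega
    rw [htake]
    simp only [hBdef, count_append]
    have e1 := count_block c (!x) r
    have e2 := count_block c x r
    rw [count_append] at e1 e2
    omega

lemma cond_of_append (x : Bool) (p w : List Bool) (hp : p.count x = p.count (!x))
    (h : Cond x (p ++ w)) : Cond x w := by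
  intro k hk h1 h2
  have hk' : p.length + k + 1 < (p ++ w).length := by simp; omega
  have e1 : (p ++ w)[p.length + k]'(Nat.lt_of_succ_lt hk') = w[k]'(Nat.lt_of_succ_lt hk) := by
    rw [getElem_append_right (by omega), gidx w (show p.length + k - p.length = k by omega)]
  have e2 : (p ++ w)[p.length + k + 1]'hk' = w[k+1]'hk := by
    rw [getElem_append_right (by omega), gidx w (show p.length + k + 1 - p.length = k + 1 by omega)]
  have := h (p.length + k) hk' (e1.trans h1) (e2.trans h2)
  have htake : (p ++ w).take (p.length + k + 1) = p ++ w.take (k+1) := by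
    rw [take_append, take_of_length_le (by omega)]
    congr 2; omega
  rw [htake, count_append, count_append] at this
  omega

/-- Reverse direction, by strong induction on length. -/
lemma rev_main : ∀ n : ℕ, ∀ w : List Bool, w.length ≤ n →
    w.count false = w.count true → Cond false w → Cond true w →
    BalancedOn false true w := by
  intro n
  induction n with
  | zero =>
    intro w hw _ _ _
    have : w = [] := by cases w <;> simp_all
    exact this ▸ BalancedOn.nil
  | succ n ih =>
    intro w hw hcount hcf hct
    have hx : ∀ x : Bool, Cond x w := by intro x; cases x; exacts [hcf, hct]
    cases hwc : w with
    | nil => exact BalancedOn.nil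
    | cons c t =>
    subst hwc
    set A := (c :: t).takeWhile (· == c) with hAdef
    set v := (c :: t).dropWhile (· == c) with hvdef
    set r := A.length with hrdef
    have hAv : A ++ v = c :: t := takeWhile_append_dropWhile ..
    have hA : A = replicate r c := by
      rw [eq_replicate_iff]
      exact ⟨rfl, fun b hb => by simpa using mem_takeWhile_imp hb⟩
    have hr1 : 1 ≤ r := by
      rw [hrdef, hAdef, takeWhile_cons]
      simp
    cases hv : v with
    | nil =>
      exfalso
      have hwr : (c :: t) = replicate r c := by rw [← hAv, hv, hA]; simp
      rw [hwr] at hcount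
      cases c <;> simp [count_replicate] at hcount <;> omega
    | cons d v0 =>
    have hd : d = !c := by
      have h' : v ≠ [] := by rw [hv]; simp
      have h'' := head_dropWhile_not (· == c) (l := c :: t)
      rw [← hvdef] at h''
      have h3 := h'' h'
      simp [hv] at h3
      cases c <;> cases d <;> first | rfl | exact h3 | exact absurd rfl h3 | exact absurd h3 (by simp)
    set B := v.takeWhile (· == !c) with hBdef
    set u := v.dropWhile (· == !c) with hudef
    set s := B.length with hsdef
    have hBu : B ++ u = v := takeWhile_append_dropWhile ..
    have hB : B = replicate s (!c) := by
      rw [eq_replicate_iff]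
      exact ⟨rfl, fun b hb => by simpa using mem_takeWhile_imp hb⟩
    have hs1 : 1 ≤ s := by
      rw [hsdef, hBdef, hv, takeWhile_cons, hd]
      simp
    have hw2 : (c :: t) = replicate r c ++ (replicate s (!c) ++ u) := by
      rw [← hAv, ← hBu, hA, hB]
    have hw3 : (c :: t) = (replicate r c ++ replicate s (!c)) ++ u := by
      rw [hw2, append_assoc]
    have hu : u = [] ∨ ∃ u0, u = c :: u0 := by
      cases hu0 : u with
      | nil => exact Or.inl rfl
      | cons e u0 =>
        right
        refine ⟨u0, ?_⟩
        have h' : u ≠ [] := by rw [hu0]; simp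
        have h'' := head_dropWhile_not (· == !c) (l := v)
        rw [← hudef] at h''
        have h3 := h'' h'
        simp [hu0] at h3
        have he : e = c := by
          cases c <;> cases e <;> first | rfl | exact h3 | exact absurd rfl h3 | exact absurd h3 (by simp)
        simp [hu0, he]
    have hrs : r ≤ s := by
      rcases hu with hu | ⟨u0, hu⟩
      · rw [hw3, hu] at hcount
        cases c <;> simp [count_replicate, count_append] at hcount <;> omega
      · have hlen : (c :: t).length = r + s + u.length := by
          rw [hw3]; simp [Nat.add_assoc]
        have hk : (r + s - 1) + 1 < (c :: t).length := by
          rw [hlen, hu]; simp; omega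
        have h1 : (c :: t)[r + s - 1]'(Nat.lt_of_succ_lt hk) = !c := by
          simp only [hw3]
          rw [getElem_append_left (by simp; omega)]
          rw [getElem_append_right (by simp; omega)]
          exact getElem_replicate ..
        have h2 : (c :: t)[(r + s - 1) + 1]'hk = !(!c) := by
          simp only [hw3]
          rw [getElem_append_right (by simp; omega)]
          rw [gidx u (show r + s - 1 + 1 - (replicate r c ++ replicate s (!c)).length = 0
            by simp; omega)]
          simp [hu, Bool.not_not]
        have hmain := hx (!c) (r + s - 1) hk h1 h2
        have htake : (c :: t).take ((r + s - 1) + 1) = replicate r c ++ replicate s (!c) := by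
          rw [hw3, take_append, take_of_length_le (by simp; omega)]
          have : (r + s - 1) + 1 - (replicate r c ++ replicate s (!c)).length = 0 := by
            simp; omega
          rw [this, take_zero, append_nil]
        rw [htake, Bool.not_not, count_append, count_append] at hmain
        cases c <;> simp [count_replicate] at hmain <;> omega
    set w' := replicate (s - r) (!c) ++ u with hw'def
    have hsr : r + (s - r) = s := by omega
    have hrep : replicate s (!c) = replicate r (!c) ++ replicate (s - r) (!c) := by
      rw [← replicate_add, hsr]
    have hsplit : (c :: t) = (replicate r c ++ replicate r (!c)) ++ w' := by
      rw [hw2, hw'def, hrep]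
      simp only [append_assoc]
    have hcount' : w'.count false = w'.count true := by
      have e1 := count_block c false r
      have e2 := count_block c true r
      rw [count_append] at e1 e2
      simp only [hsplit, count_append] at hcount
      omega
    have hcond' : ∀ x : Bool, Cond x w' := by
      intro x
      apply cond_of_append x (replicate r c ++ replicate r (!c)) w'
        (by rw [count_block, count_block])
      rw [← hsplit]
      exact hx x
    have hlen' : w'.length ≤ n := by
      have h1 : (c :: t).length = 2*r + w'.length := by rw [hsplit]; simp; omega
      have h2 : (c :: t).length ≤ n + 1 := hw
      omega
    have hbal' : BalancedOn false true w' := ih w' hlen' hcount' (hcond' false) (hcond' true)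
    rw [hsplit]
    cases c with
    | false => exact BalancedOn.lo r w' hr1 hbal'
    | true => exact BalancedOn.hi r w' hr1 hbal'

lemma bal_iff_cond (w : List Bool) :
    BalancedOn false true w ↔
      w.count false = w.count true ∧ Cond false w ∧ Cond true w := by
  constructor
  · intro hb
    induction hb with
    | nil => refine ⟨rfl, ?_, ?_⟩ <;> intro k hk <;> simp at hk
    | lo r w hr hw ih =>
      obtain ⟨hc, h1, h2⟩ := ih
      refine ⟨?_, ?_, ?_⟩
      · simp [count_append, count_replicate]; omega
      · exact cond_cons_block false false r w h1
      · exact cond_cons_block true false r w h2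
    | hi r w hr hw ih =>
      obtain ⟨hc, h1, h2⟩ := ih
      refine ⟨?_, ?_, ?_⟩
      · simp [count_append, count_replicate]; omega
      · exact cond_cons_block false true r w h1
      · exact cond_cons_block true true r w h2
  · rintro ⟨hc, h1, h2⟩
    exact rev_main w.length w le_rfl hc h1 h2

lemma occ_iff (x : Bool) (w : List Bool) :
    (∀ i j p : ℕ, IsOccPos w x i p → IsOccPos w (!x) (j + 1) (p + 1) → j ≤ i) ↔ Cond x w := by
  constructor
  · intro h k hk h1 h2
    have hk0 : k < w.length := Nat.lt_of_succ_lt hk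
    refine h _ _ (k+1) ⟨by omega, by omega, ?_, rfl⟩
      ⟨by omega, by omega, ?_, ?_⟩
    · rw [getD_eq_getElem _ _ (by omega : k + 1 - 1 < w.length)]
      simpa using h1
    · rw [getD_eq_getElem _ _ (by omega : k + 1 + 1 - 1 < w.length)]
      rw [gidx w (show k + 1 + 1 - 1 = k + 1 by omega)]
      exact h2
    · rw [count_take_succ w _ (k+1) hk, h2, if_pos rfl]
  · intro h i j p h1 h2
    obtain ⟨hp1, hp2, hg1, hc1⟩ := h1
    obtain ⟨_, hq2, hg2, hc2⟩ := h2
    have hq2' : p + 1 ≤ w.length := by simpa using hq2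
    have hk : (p - 1) + 1 < w.length := by omega
    have e1 : w[p-1]'(Nat.lt_of_succ_lt hk) = x := by
      rw [getD_eq_getElem _ _ (by omega : p - 1 < w.length)] at hg1
      exact hg1
    have e2 : w[(p-1)+1]'hk = !x := by
      rw [getD_eq_getElem _ _ (by omega : p + 1 - 1 < w.length)] at hg2
      rw [gidx w (show (p-1)+1 = p+1-1 by omega)]
      exact hg2
    have hmain := h (p - 1) hk e1 e2
    have ep : (p - 1) + 1 = p := by omega
    rw [ep] at hmain
    rw [hc1] at hmain
    have hsucc : (w.take (p+1)).count (!x) = (w.take p).count (!x) + 1 := by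
      rw [count_take_succ w _ p (by omega), if_pos]
      rw [gidx w (show p = (p-1)+1 by omega)]
      exact e2
    omega

end Aux

/-- **Lemma (characterization of balanced words).** A word on `{a ≺ b}` (here
`a = false`, `b = true`) is balanced iff it has as many `a`'s as `b`'s, and whenever
the position immediately after the `i`-th occurrence of one letter is the position of
the `(j+1)`-st occurrence of the other letter, then `i ≥ j`. -/
theorem balanced_iff (w : List Bool) :
    BalancedOn false true w ↔
      (w.count false = w.count true ∧
       (∀ i j p : ℕ, IsOccPos w false i p → IsOccPos w true (j + 1) (p + 1) → j ≤ i) ∧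
       (∀ i j p : ℕ, IsOccPos w true i p → IsOccPos w false (j + 1) (p + 1) → j ≤ i)) := by
  rw [bal_iff_cond]
  constructor
  · rintro ⟨hc, h1, h2⟩
    exact ⟨hc, (occ_iff false w).mpr h1, (occ_iff true w).mpr h2⟩
  · rintro ⟨hc, h1, h2⟩
    exact ⟨hc, (occ_iff false w).mp h1, (occ_iff true w).mp h2⟩


end
end

section
/- Let ω be a balanced word on the ordered alphabet {a, b} and suppose ω = ω_1 · ω_2. Then the following are equivalent: (i) ω_1 is balanced; (ii) ω_2 is balanced; (iii) ω_1 contains the same number of a's as b's; (iv) ω_2 contains the same number of a's as b's. -/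
noncomputable section

lemma BalancedOn.count_eq' {α : Type*} [DecidableEq α] {a b : α} (hab : a ≠ b)
    {w : List α} (h : BalancedOn a b w) : w.count a = w.count b := by
  induction h with
  | nil => rfl
  | lo r w hr hw ih =>
      simp [List.count_append, List.count_replicate, hab, hab.symm, ih]
  | hi r w hr hw ih =>
      simp [List.count_append, List.count_replicate, hab, hab.symm, ih]

lemma take_block_count {α : Type*} [DecidableEq α] {a b : α} (hab : a ≠ b) (r k : ℕ)
    (hk : k ≤ 2 * r)
    (h : ((List.replicate r a ++ List.replicate r b).take k).count a
       = ((List.replicate r a ++ List.replicate r b).take k).count b) :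
    k = 0 ∨ k = 2 * r := by
  rw [List.take_append, List.take_replicate, List.take_replicate] at h
  simp [List.count_append, List.count_replicate, hab, hab.symm] at h
  omega

lemma block_balanced_lo {α : Type*} (a b : α) (r : ℕ) (hr : 0 < r) :
    BalancedOn a b (List.replicate r a ++ List.replicate r b) := by
  have := BalancedOn.lo (a := a) (b := b) r [] hr .nil
  simpa using this

lemma block_balanced_hi {α : Type*} (a b : α) (r : ℕ) (hr : 0 < r) :
    BalancedOn a b (List.replicate r b ++ List.replicate r a) := by
  have := BalancedOn.hi (a := a) (b := b) r [] hr .nil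
  simpa using this

lemma split_balanced {α : Type*} [DecidableEq α] {a b : α} (hab : a ≠ b)
    {w : List α} (h : BalancedOn a b w) : ∀ w₁ w₂ : List α, w₁ ++ w₂ = w →
      w₁.count a = w₁.count b → BalancedOn a b w₁ ∧ BalancedOn a b w₂ := by
  induction h with
  | nil =>
      intro w₁ w₂ he _
      rcases List.append_eq_nil_iff.mp he with ⟨h1, h2⟩
      subst h1; subst h2; exact ⟨.nil, .nil⟩
  | lo r w hr hw ih =>
      intro w₁ w₂ he hc
      have hblen : (List.replicate r a ++ List.replicate r b).length = 2 * r := by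
        simp; omega
      by_cases hn : w₁.length ≤ 2 * r
      · have hw₁ : w₁ = (List.replicate r a ++ List.replicate r b).take w₁.length := by
          have h1 : (w₁ ++ w₂).take w₁.length = w₁ := List.take_left
          rw [he, List.take_append_of_le_length (by omega)] at h1
          exact h1.symm
        rcases take_block_count hab r w₁.length hn (by rw [← hw₁]; exact hc) with h0 | h2
        · have : w₁ = [] := List.length_eq_zero_iff.mp h0
          subst this
          simp only [List.nil_append] at he
          subst he
          exact ⟨.nil, .lo r w hr hw⟩
        · have hw₁' : w₁ = List.replicate r a ++ List.replicate r b := by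
            rw [hw₁, h2, ← hblen, List.take_length]
          rw [hw₁'] at he
          have hw₂ : w₂ = w := List.append_cancel_left he
          subst hw₂
          exact ⟨hw₁' ▸ block_balanced_lo a b r hr, hw⟩
      · push_neg at hn
        have htake : w₁.take (2 * r) = List.replicate r a ++ List.replicate r b := by
          have h1 : (w₁ ++ w₂).take (2 * r) = w₁.take (2 * r) :=
            List.take_append_of_le_length (by omega)
          rw [he, ← hblen, List.take_left] at h1
          rw [hblen] at h1
          exact h1.symm
        have hw₁ : w₁ = (List.replicate r a ++ List.replicate r b) ++ w₁.drop (2 * r) := by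
          rw [← htake, List.take_append_drop]
        have hww : w₁.drop (2 * r) ++ w₂ = w := by
          rw [hw₁, List.append_assoc] at he
          exact List.append_cancel_left he
        have hc' : (w₁.drop (2 * r)).count a = (w₁.drop (2 * r)).count b := by
          rw [hw₁] at hc
          simp [List.count_append, List.count_replicate, hab, hab.symm] at hc
          omega
        obtain ⟨b₁, b₂⟩ := ih _ _ hww hc'
        refine ⟨?_, b₂⟩
        rw [hw₁]
        exact .lo r _ hr b₁
  | hi r w hr hw ih =>
      intro w₁ w₂ he hc
      have hblen : (List.replicate r b ++ List.replicate r a).length = 2 * r := by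
        simp; omega
      by_cases hn : w₁.length ≤ 2 * r
      · have hw₁ : w₁ = (List.replicate r b ++ List.replicate r a).take w₁.length := by
          have h1 : (w₁ ++ w₂).take w₁.length = w₁ := List.take_left
          rw [he, List.take_append_of_le_length (by omega)] at h1
          exact h1.symm
        rcases take_block_count hab.symm r w₁.length hn (by rw [← hw₁]; exact hc.symm)
          with h0 | h2
        · have : w₁ = [] := List.length_eq_zero_iff.mp h0
          subst this
          simp only [List.nil_append] at he
          subst he
          exact ⟨.nil, .hi r w hr hw⟩
        · have hw₁' : w₁ = List.replicate r b ++ List.replicate r a := by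
            rw [hw₁, h2, ← hblen, List.take_length]
          rw [hw₁'] at he
          have hw₂ : w₂ = w := List.append_cancel_left he
          subst hw₂
          exact ⟨hw₁' ▸ block_balanced_hi a b r hr, hw⟩
      · push_neg at hn
        have htake : w₁.take (2 * r) = List.replicate r b ++ List.replicate r a := by
          have h1 : (w₁ ++ w₂).take (2 * r) = w₁.take (2 * r) :=
            List.take_append_of_le_length (by omega)
          rw [he, ← hblen, List.take_left] at h1
          rw [hblen] at h1
          exact h1.symm
        have hw₁ : w₁ = (List.replicate r b ++ List.replicate r a) ++ w₁.drop (2 * r) := by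
          rw [← htake, List.take_append_drop]
        have hww : w₁.drop (2 * r) ++ w₂ = w := by
          rw [hw₁, List.append_assoc] at he
          exact List.append_cancel_left he
        have hc' : (w₁.drop (2 * r)).count a = (w₁.drop (2 * r)).count b := by
          rw [hw₁] at hc
          simp [List.count_append, List.count_replicate, hab, hab.symm] at hc
          omega
        obtain ⟨b₁, b₂⟩ := ih _ _ hww hc'
        refine ⟨?_, b₂⟩
        rw [hw₁]
        exact .hi r _ hr b₁

/-- **Corollary.** If `w₁ ++ w₂` is balanced then: `w₁` balanced ↔ `w₂` balanced ↔
`w₁` has as many `a`'s as `b`'s ↔ `w₂` has as many `a`'s as `b`'s. -/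
theorem balanced_concat (w₁ w₂ : List Bool) (h : BalancedOn false true (w₁ ++ w₂)) :
    ((BalancedOn false true w₁ ↔ BalancedOn false true w₂) ∧
     (BalancedOn false true w₁ ↔ w₁.count false = w₁.count true) ∧
     (BalancedOn false true w₁ ↔ w₂.count false = w₂.count true)) := by
  have hab : (false : Bool) ≠ true := Bool.false_ne_true
  have htot : (w₁ ++ w₂).count false = (w₁ ++ w₂).count true := h.count_eq' hab
  rw [List.count_append, List.count_append] at htot
  have key := split_balanced hab h w₁ w₂ rfl
  have c12 : w₁.count false = w₁.count true ↔ w₂.count false = w₂.count true := by omega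
  have h1c : BalancedOn false true w₁ → w₁.count false = w₁.count true :=
    fun hb => hb.count_eq' hab
  have h2c : BalancedOn false true w₂ → w₂.count false = w₂.count true :=
    fun hb => hb.count_eq' hab
  refine ⟨⟨fun hb => (key (h1c hb)).2, fun hb => (key (c12.mpr (h2c hb))).1⟩,
    ⟨h1c, fun hc => (key hc).1⟩, ⟨fun hb => c12.mp (h1c hb), fun hc => (key (c12.mpr hc)).1⟩⟩

end
end

section
/- For any integer n ≥ 3 and any word ω on the ordered alphabet {a, b}, there exists a regular sequence ν on [n] = {1, …, n} whose restriction ν_{{1,2}} is order equivalent to ω if and only if ω is balanced. -/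
noncomputable section

/-- `i`-th occurrence of `x` comes strictly before the `j`-th occurrence of `y`
(prefix-count formulation). -/
def RelW {α : Type*} [DecidableEq α] (v : List α) (x : α) (i : ℕ) (y : α) (j : ℕ) : Prop :=
  ∃ p, i ≤ ((v.take p).count x) ∧ (v.take p).count y < j

theorem count_take_mono {α : Type*} [DecidableEq α] (v : List α) (a : α) {p q : ℕ} (h : p ≤ q) :
    (v.take p).count a ≤ (v.take q).count a := by
  have : v.take p = (v.take q).take p := by rw [List.take_take, Nat.min_eq_left h]
  rw [this]
  exact (List.take_sublist _ _).count_le a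

theorem relW_asymm {α : Type*} [DecidableEq α] {v : List α} {x y : α} {i j : ℕ}
    (h1 : RelW v x i y j) (h2 : RelW v y j x i) : False := by
  obtain ⟨p, hp1, hp2⟩ := h1
  obtain ⟨q, hq1, hq2⟩ := h2
  rcases le_total p q with h | h
  · exact absurd (hp1.trans (count_take_mono v x h)) (by omega)
  · exact absurd (hq1.trans (count_take_mono v y h)) (by omega)

theorem relW_trans {α : Type*} [DecidableEq α] {v : List α} {x y z : α} {i j k : ℕ}
    (h1 : RelW v x i y j) (h2 : RelW v y j z k) : RelW v x i z k := by
  obtain ⟨p, hp1, hp2⟩ := h1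
  obtain ⟨q, hq1, hq2⟩ := h2
  have hpq : p ≤ q := by
    by_contra h
    exact absurd (hq1.trans (count_take_mono v y (le_of_not_ge h))) (by omega)
  exact ⟨p, hp1, lt_of_le_of_lt (count_take_mono v z hpq) hq2⟩

theorem relW_append {α : Type*} [DecidableEq α] {v : List α} {x y : α} {i j : ℕ}
    (u : List α) (h : RelW v x i y j) : RelW (u ++ v) x (i + u.count x) y (j + u.count y) := by
  obtain ⟨p, hp1, hp2⟩ := h
  refine ⟨u.length + p, ?_, ?_⟩ <;>
    rw [List.take_append, List.take_of_length_le (by omega),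
      Nat.add_sub_cancel_left, List.count_append] <;> omega

/-- extracting a `take` of the filtered list as the filter of a take. -/
theorem exists_take_filter {α : Type*} (l : List α) (f : α → Bool) (q : ℕ) :
    ∃ p, (l.filter f).take q = (l.take p).filter f := by
  induction l generalizing q with
  | nil => exact ⟨0, by simp⟩
  | cons a t ih =>
    rcases Nat.eq_zero_or_pos q with rfl | hq
    · exact ⟨0, by simp⟩
    by_cases hf : f a
    · obtain ⟨p, hp⟩ := ih (q - 1)
      refine ⟨p + 1, ?_⟩
      rw [List.take_succ_cons, List.filter_cons_of_pos hf, List.filter_cons_of_pos hf]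
      obtain ⟨q', rfl⟩ : ∃ q', q = q' + 1 := ⟨q - 1, by omega⟩
      simpa using hp
    · obtain ⟨p, hp⟩ := ih q
      refine ⟨p + 1, ?_⟩
      rw [List.take_succ_cons, List.filter_cons_of_neg (by simpa using hf),
        List.filter_cons_of_neg (by simpa using hf)]
      exact hp

theorem relW_filter {α : Type*} [DecidableEq α] (v : List α) (f : α → Bool) {x y : α}
    (hx : f x) (hy : f y) (i j : ℕ) :
    RelW (v.filter f) x i y j ↔ RelW v x i y j := by
  constructor
  · rintro ⟨q, hq1, hq2⟩
    obtain ⟨p, hp⟩ := exists_take_filter v f q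
    rw [hp, List.count_filter hx] at hq1
    rw [hp, List.count_filter hy] at hq2
    exact ⟨p, hq1, hq2⟩
  · rintro ⟨p, hp1, hp2⟩
    have hpre : ((v.take p).filter f) <+: v.filter f := (List.take_prefix p v).filter f
    have hq := List.prefix_iff_eq_take.mp hpre
    refine ⟨((v.take p).filter f).length, ?_, ?_⟩
    · rw [← hq, List.count_filter hx]; exact hp1
    · rw [← hq, List.count_filter hy]; exact hp2
theorem ordEquiv_symm_s10 {α β : Type*} [LT α] [LT β] {u : List α} {v : List β}
    (h : OrdEquiv u v) : OrdEquiv v u := by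
  obtain ⟨hl, H⟩ := h
  refine ⟨hl.symm, fun s t => ?_⟩
  have := H (Fin.cast hl.symm s) (Fin.cast hl.symm t)
  simpa using this.symm

theorem ordEquiv_trans_s10 {α β γ : Type*} [LT α] [LT β] [LT γ] {u : List α} {v : List β}
    {z : List γ} (h1 : OrdEquiv u v) (h2 : OrdEquiv v z) : OrdEquiv u z := by
  obtain ⟨hl1, H1⟩ := h1
  obtain ⟨hl2, H2⟩ := h2
  refine ⟨hl1.trans hl2, fun s t => ?_⟩
  rw [H1 s t, H2 (Fin.cast hl1 s) (Fin.cast hl1 t)]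
  rfl

/-- if `u` is a word over `{x, y}` with `x < y`, both occurring, that is order
equivalent to the Bool word `v`, then `v` is the pointwise shape of `u`. -/
theorem eq_map_of_ordEquiv {u : List ℕ} {v : List Bool} {x y : ℕ}
    (hxy : x < y) (hmem : ∀ z ∈ u, z = x ∨ z = y) (hx : x ∈ u) (hy : y ∈ u)
    (h : OrdEquiv u v) : v = u.map (fun z => decide (z = y)) := by
  obtain ⟨hl, H⟩ := h
  apply List.ext_getElem (by simp [← hl])
  intro t h1 h2
  have hlt : t < u.length := by simpa [← hl] using h1
  rw [List.getElem_map]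
  obtain ⟨s, hsl, hs⟩ := List.mem_iff_getElem.mp hx
  obtain ⟨s', hsl', hs'⟩ := List.mem_iff_getElem.mp hy
  rcases hmem (u[t]'hlt) (List.getElem_mem hlt) with h | h
  · have hlt2 : u.get ⟨t, hlt⟩ < u.get ⟨s', hsl'⟩ := by
      show u[t]'hlt < u[s']'hsl'
      rw [h, hs']; exact hxy
    have hv := (H ⟨t, hlt⟩ ⟨s', hsl'⟩).mp hlt2
    have h5 : v[t]'h1 = false := (Bool.lt_iff.mp hv).1
    rw [h5, h]
    simp [Nat.ne_of_lt hxy]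
  · have hlt2 : u.get ⟨s, hsl⟩ < u.get ⟨t, hlt⟩ := by
      show u[s]'hsl < u[t]'hlt
      rw [h, hs]; exact hxy
    have hv := (H ⟨s, hsl⟩ ⟨t, hlt⟩).mp hlt2
    have h5 : v[t]'h1 = true := (Bool.lt_iff.mp hv).2
    rw [h5, h]
    simp
theorem count_map_shape {x y : ℕ} (hne : x ≠ y) :
    ∀ (l : List ℕ), (∀ z ∈ l, z = x ∨ z = y) →
      (l.map (fun z => decide (z = y))).count false = l.count x ∧
      (l.map (fun z => decide (z = y))).count true = l.count y := by
  intro l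
  induction l with
  | nil => simp
  | cons a t ih =>
    intro hm
    obtain ⟨ih1, ih2⟩ := ih (fun z hz => hm z (List.mem_cons_of_mem _ hz))
    rcases hm a List.mem_cons_self with rfl | rfl <;>
      simp [List.count_cons, ih1, ih2, hne, Ne.symm hne]

/-- length of a two-element filter equals sum of counts. -/
theorem length_filter_pair {x y : ℕ} (hne : x ≠ y) (p : ℕ → Bool)
    (hp : ∀ z, p z = true ↔ z = x ∨ z = y) (l : List ℕ) :
    (l.filter p).length = l.count x + l.count y := by
  induction l with
  | nil => simp
  | cons a t ih =>
    by_cases h : p a = true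
    · rw [List.filter_cons_of_pos h]
      rcases (hp a).mp h with rfl | rfl
      · simp [List.count_cons, ih, hne, Ne.symm hne]; omega
      · simp [List.count_cons, ih, hne, Ne.symm hne]; omega
    · rw [List.filter_cons_of_neg (by simpa using h)]
      have h1 : a ≠ x := fun e => h ((hp a).mpr (Or.inl e))
      have h2 : a ≠ y := fun e => h ((hp a).mpr (Or.inr e))
      simp [List.count_cons, h1, h2, ih]
theorem relW_of_split {α : Type*} [DecidableEq α] {v : List α} (A B : List α) {x y : α}
    {i j : ℕ} (h : v = A ++ B) (h1 : i ≤ A.count x) (h2 : A.count y < j) : RelW v x i y j :=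
  ⟨A.length, by rw [h, List.take_left]; exact h1, by rw [h, List.take_left]; exact h2⟩

theorem dropWhile_head_not {α : Type*} (p : α → Bool) :
    ∀ (l : List α) {d : α} {t : List α}, l.dropWhile p = d :: t → p d = false := by
  intro l
  induction l with
  | nil => intro d t h; simp at h
  | cons a l ih =>
    intro d t h
    by_cases ha : p a = true
    · rw [List.dropWhile_cons_of_pos ha] at h; exact ih h
    · rw [List.dropWhile_cons_of_neg (by simpa using ha)] at h
      cases h; simpa using ha

theorem core_balanced :
    ∀ (N : ℕ) (w : List Bool), w.length ≤ N → w.count false = w.count true →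
    (∀ a b : Bool, a ≠ b →
      ¬ ∃ i j k, RelW w a i b j ∧ RelW w a j b k ∧ RelW w b k a i) →
    BalancedOn false true w := by
  intro N
  induction N with
  | zero =>
    intro w hlen _ _
    rw [List.length_eq_zero_iff.mp (Nat.le_zero.mp hlen)]
    exact BalancedOn.nil
  | succ N ih =>
    intro w hlen hcnt hno
    rcases w with _ | ⟨c, t⟩
    · exact BalancedOn.nil
    set v : List Bool := c :: t with hv
    -- first run
    set p1 : Bool → Bool := fun z => z == c with hp1
    have hw1 : v.takeWhile p1 ++ v.dropWhile p1 = v := List.takeWhile_append_dropWhile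
    set r : ℕ := (v.takeWhile p1).length with hrdef
    have htw : v.takeWhile p1 = List.replicate r c := by
      apply List.eq_replicate_of_mem
      intro b hb
      simpa [hp1] using List.mem_takeWhile_imp hb
    have hr : 0 < r := by
      rw [hrdef, hv, List.takeWhile_cons_of_pos (by simp [hp1])]
      simp
    rcases hdw : v.dropWhile p1 with _ | ⟨d, dt⟩
    · -- w is a single run: contradicts equal counts
      rw [hdw, List.append_nil, htw] at hw1
      rw [← hw1] at hcnt
      rcases c <;> simp [List.count_replicate] at hcnt <;> omega
    · have hdc : d ≠ c := by simpa [hp1] using dropWhile_head_not p1 v hdw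
      have hd : d = !c := by
        rcases c <;> rcases d <;> first | rfl | exact absurd rfl hdc
      have hall : ∀ a : Bool, a = c ∨ a = d := by rw [hd]; rcases c <;> decide
      -- second run, within dw := d :: dt
      set dw : List Bool := d :: dt with hdwdef
      set p2 : Bool → Bool := fun z => z == d with hp2
      have hw2 : dw.takeWhile p2 ++ dw.dropWhile p2 = dw := List.takeWhile_append_dropWhile
      set s : ℕ := (dw.takeWhile p2).length with hsdef
      have htw2 : dw.takeWhile p2 = List.replicate s d := by
        apply List.eq_replicate_of_mem
        intro b hb
        simpa [hp2] using List.mem_takeWhile_imp hb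
      have hs : 0 < s := by
        rw [hsdef, hdwdef, List.takeWhile_cons_of_pos (by simp [hp2])]
        simp
      set dw2 : List Bool := dw.dropWhile p2 with hdw2
      have hcd : c ≠ d := Ne.symm hdc
      have hsplit : v = List.replicate r c ++ (List.replicate s d ++ dw2) := by
        rw [← htw, ← htw2, hw2, ← hdw, hw1]
      rcases Nat.lt_or_ge s r with hsr | hrs
      · -- forbidden configuration
        exfalso
        rcases hdw2e : dw2 with _ | ⟨e, et⟩
        · rw [hdw2e, List.append_nil] at hsplit
          rw [hsplit] at hcnt
          rcases c <;> rcases d <;> first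
            | exact hcd rfl
            | (simp [List.count_append, List.count_replicate] at hcnt; omega)
        · have hed : e ≠ d := by
            simpa [hp2] using dropWhile_head_not p2 dw (hdw2.symm.trans hdw2e)
          have he : e = c := by rcases hall e with h | h; exact h; exact absurd h hed
          obtain ⟨q, hq⟩ : ∃ q, r = (s + 1) + q := ⟨r - (s + 1), by omega⟩
          have hv1 : v = (List.replicate r c ++ List.replicate s d ++ [c]) ++ et := by
            rw [hsplit, hdw2e, he]; simp [List.append_assoc]
          have hv2 : v = List.replicate (s + 1) c ++
              (List.replicate q c ++ (List.replicate s d ++ dw2)) := by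
            rw [hsplit]
            conv_rhs => rw [← List.append_assoc, ← List.replicate_add]
            rw [hq]
          have hv3 : v = (List.replicate r c ++ List.replicate s d) ++ dw2 := by
            rw [hsplit, List.append_assoc]
          apply hno c d hcd
          refine ⟨r + 1, s + 1, s, ?_, ?_, ?_⟩
          · refine relW_of_split _ _ hv1 ?_ ?_ <;>
              simp [List.count_append, List.count_replicate, hcd, Ne.symm hcd] <;> omega
          · refine relW_of_split _ _ hv2 ?_ ?_ <;>
              simp [List.count_append, List.count_replicate, hcd, Ne.symm hcd] <;> omega
          · refine relW_of_split _ _ hv3 ?_ ?_ <;>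
              simp [List.count_append, List.count_replicate, hcd, Ne.symm hcd] <;> omega
      · -- peel off a balanced block and recurse
        obtain ⟨q2, hq2⟩ : ∃ q2, s = r + q2 := ⟨s - r, by omega⟩
        set rest : List Bool := List.replicate q2 d ++ dw2 with hrest
        have hsplit2 : v = (List.replicate r c ++ List.replicate r d) ++ rest := by
          rw [hsplit, hrest, hq2, List.replicate_add]
          simp only [List.append_assoc]
        have hprecnt : ∀ a : Bool, (List.replicate r c ++ List.replicate r d).count a = r := by
          intro a
          rcases hall a with rfl | rfl <;>
            simp [List.count_append, List.count_replicate, hcd, Ne.symm hcd]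
        have hlen2 : rest.length ≤ N := by
          have := congrArg List.length hsplit2
          simp [List.length_append] at this
          have hlv : v.length ≤ N + 1 := hlen
          omega
        have hcnt2 : rest.count false = rest.count true := by
          have h1 : v.count false = r + rest.count false := by
            rw [hsplit2, List.count_append, hprecnt]
          have h2 : v.count true = r + rest.count true := by
            rw [hsplit2, List.count_append, hprecnt]
          omega
        have hno2 : ∀ a b : Bool, a ≠ b →
            ¬ ∃ i j k, RelW rest a i b j ∧ RelW rest a j b k ∧ RelW rest b k a i := by
          rintro a b hab ⟨i, j, k, R1, R2, R3⟩
          apply hno a b hab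
          refine ⟨i + r, j + r, k + r, ?_, ?_, ?_⟩
          · have := relW_append (List.replicate r c ++ List.replicate r d) R1
            rwa [hprecnt, hprecnt, ← hsplit2] at this
          · have := relW_append (List.replicate r c ++ List.replicate r d) R2
            rwa [hprecnt, hprecnt, ← hsplit2] at this
          · have := relW_append (List.replicate r c ++ List.replicate r d) R3
            rwa [hprecnt, hprecnt, ← hsplit2] at this
        have hbal := ih rest hlen2 hcnt2 hno2
        rw [hsplit2]
        rcases c with _ | _
        · rw [show d = true by simpa using hd]
          exact BalancedOn.lo r rest hr hbal
        · rw [show d = false by simpa using hd]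
          exact BalancedOn.hi r rest hr hbal
theorem filt_one : ∀ (len s : ℕ) (p : ℕ → Bool) (x : ℕ), s ≤ x → x < s + len →
    (∀ z, s ≤ z → z < s + len → (p z = true ↔ z = x)) →
    (List.range' s len).filter p = [x] := by
  intro len
  induction len with
  | zero => intro s p x h1 h2; omega
  | succ len ih =>
    intro s p x h1 h2 hp
    rw [List.range'_succ]
    rcases Nat.eq_or_lt_of_le h1 with rfl | hlt
    · rw [List.filter_cons_of_pos ((hp s h1 (by omega)).mpr rfl)]
      have : (List.range' (s + 1) len).filter p = [] := by
        apply List.filter_eq_nil_iff.mpr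
        intro z hz
        rw [List.mem_range'_1] at hz
        simp only [ne_eq, Bool.not_eq_true]
        rw [← Bool.not_eq_true]
        intro hzz
        have := (hp z (by omega) (by omega)).mp hzz
        omega
      rw [this]
    · rw [List.filter_cons_of_neg]
      · exact ih (s + 1) p x (by omega) (by omega) (fun z hz1 hz2 => hp z (by omega) (by omega))
      · simp only [Bool.not_eq_true]
        rw [← Bool.not_eq_true]
        intro hzz
        have := (hp s (le_refl s) (by omega)).mp hzz
        omega

theorem filt_two : ∀ (len s : ℕ) (p : ℕ → Bool) (x y : ℕ), s ≤ x → x < y → y < s + len →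
    (∀ z, s ≤ z → z < s + len → (p z = true ↔ z = x ∨ z = y)) →
    (List.range' s len).filter p = [x, y] := by
  intro len
  induction len with
  | zero => intro s p x y h1 h2 h3; omega
  | succ len ih =>
    intro s p x y h1 h2 h3 hp
    rw [List.range'_succ]
    rcases Nat.eq_or_lt_of_le h1 with rfl | hlt
    · rw [List.filter_cons_of_pos ((hp s h1 (by omega)).mpr (Or.inl rfl))]
      have : (List.range' (s + 1) len).filter p = [y] := by
        apply filt_one len (s + 1) p y (by omega) (by omega)
        intro z hz1 hz2
        rw [hp z (by omega) (by omega)]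
        omega
      rw [this]
    · rw [List.filter_cons_of_neg]
      · exact ih (s + 1) p x y (by omega) h2 (by omega)
          (fun z hz1 hz2 => hp z (by omega) (by omega))
      · simp only [Bool.not_eq_true]
        rw [← Bool.not_eq_true]
        intro hzz
        have := (hp s (le_refl s) (by omega)).mp hzz
        omega

theorem filter_flatMap_replicate (p : ℕ → Bool) (r : ℕ) :
    ∀ l : List ℕ, (l.flatMap fun z => List.replicate r z).filter p
      = (l.filter p).flatMap fun z => List.replicate r z := by
  intro l
  induction l with
  | nil => simp
  | cons a t ih =>
    rw [List.flatMap_cons, List.filter_append, ih, List.filter_replicate]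
    by_cases hpa : p a = true
    · rw [List.filter_cons_of_pos hpa, if_pos hpa, List.flatMap_cons]
    · rw [List.filter_cons_of_neg (by simpa using hpa), if_neg hpa, List.nil_append]

/-- the canonical regular word associated to a balanced `w`, blockwise. -/
theorem exists_nu (n : ℕ) (w : List Bool) (hbal : BalancedOn false true w) :
    ∃ ν : List ℕ, (∀ x ∈ ν, x ∈ Finset.Icc 1 n) ∧
      (∀ (p : ℕ → Bool) (x y : ℕ), 1 ≤ x → x < y → y ≤ n →
        (∀ z, 1 ≤ z → z ≤ n → (p z = true ↔ z = x ∨ z = y)) →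
        ν.filter p = w.map (fun b => bif b then y else x)) := by
  induction hbal with
  | nil => exact ⟨[], by simp, fun p x y _ _ _ _ => by simp⟩
  | lo r w' hr hw' ih =>
    obtain ⟨ν', hν'mem, hν'⟩ := ih
    refine ⟨((List.range' 1 n).flatMap fun z => List.replicate r z) ++ ν', ?_, ?_⟩
    · intro z hz
      rcases List.mem_append.mp hz with hz | hz
      · obtain ⟨u, hu, hzu⟩ := List.mem_flatMap.mp hz
        rw [List.eq_of_mem_replicate hzu]
        rw [List.mem_range'_1] at hu
        simp only [Finset.mem_Icc]; omega
      · exact hν'mem z hz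
    · intro p x y hx hxy hy hp
      rw [List.filter_append, filter_flatMap_replicate,
        filt_two n 1 p x y hx hxy (by omega) (fun z h1 h2 => hp z h1 (by omega)),
        hν' p x y hx hxy hy hp]
      simp [List.map_append, List.map_replicate]
  | hi r w' hr hw' ih =>
    obtain ⟨ν', hν'mem, hν'⟩ := ih
    refine ⟨(((List.range' 1 n).reverse).flatMap fun z => List.replicate r z) ++ ν', ?_, ?_⟩
    · intro z hz
      rcases List.mem_append.mp hz with hz | hz
      · obtain ⟨u, hu, hzu⟩ := List.mem_flatMap.mp hz
        rw [List.eq_of_mem_replicate hzu]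
        rw [List.mem_reverse, List.mem_range'_1] at hu
        simp only [Finset.mem_Icc]; omega
      · exact hν'mem z hz
    · intro p x y hx hxy hy hp
      rw [List.filter_append, filter_flatMap_replicate, List.filter_reverse,
        filt_two n 1 p x y hx hxy (by omega) (fun z h1 h2 => hp z h1 (by omega)),
        hν' p x y hx hxy hy hp]
      simp [List.map_append, List.map_replicate]
theorem ordEquiv_map {w : List Bool} {β γ : Type*} [LT β] [LT γ] (f : Bool → β) (g : Bool → γ)
    (hfg : ∀ a b : Bool, f a < f b ↔ g a < g b) : OrdEquiv (w.map f) (w.map g) := by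
  refine ⟨by simp, fun s t => ?_⟩
  have hs : (s : ℕ) < w.length := by simpa using s.2
  have ht : (t : ℕ) < w.length := by simpa using t.2
  simp only [List.get_eq_getElem, List.getElem_map, Fin.coe_cast]
  exact hfg _ _

/-- a two-element subset of `Icc 1 n`, normalized. -/
theorem pair_normalize {n : ℕ} (X : Finset ℕ) (hX : X ⊆ Finset.Icc 1 n) (hc : X.card = 2) :
    ∃ x y : ℕ, 1 ≤ x ∧ x < y ∧ y ≤ n ∧ ∀ z, z ∈ X ↔ z = x ∨ z = y := by
  obtain ⟨a, b, hab, rfl⟩ := Finset.card_eq_two.mp hc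
  have ha' : a ∈ Finset.Icc 1 n := hX (Finset.mem_insert_self a {b})
  have hb' : b ∈ Finset.Icc 1 n := hX (by simp)
  have ha := Finset.mem_Icc.mp ha'
  have hb := Finset.mem_Icc.mp hb'
  rcases Nat.lt_or_ge a b with h | h
  · exact ⟨a, b, by omega, h, by omega, fun z => by simp⟩
  · have h' : b < a := by omega
    exact ⟨b, a, by omega, h', by omega, fun z => by simp; tauto⟩

/-- transfer of the occurrence-order relation along the shape map. -/
theorem relW_transfer {u : List ℕ} {w : List Bool} {x y : ℕ} (hxy : x < y)
    (hmem : ∀ z ∈ u, z = x ∨ z = y) (hw : w = u.map (fun z => decide (z = y))) (i j : ℕ) :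
    (RelW w false i true j ↔ RelW u x i y j) ∧ (RelW w true i false j ↔ RelW u y i x j) := by
  have key : ∀ p : ℕ, (w.take p).count false = (u.take p).count x ∧
      (w.take p).count true = (u.take p).count y := by
    intro p
    have hmem' : ∀ z ∈ u.take p, z = x ∨ z = y :=
      fun z hz => hmem z ((List.take_sublist p u).mem hz)
    have := count_map_shape (Nat.ne_of_lt hxy) (u.take p) hmem'
    rwa [List.map_take, ← hw] at this
  constructor <;> constructor <;> rintro ⟨p, h1, h2⟩ <;> refine ⟨p, ?_, ?_⟩ <;>
    first
      | (rw [(key p).1] at h1 ⊢; omega)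
      | (rw [(key p).2] at h2 ⊢; omega)
      | (rw [(key p).1] at h1 h2 ⊢; omega)
      | (have k1 := (key p).1; have k2 := (key p).2; omega)

/-- **Proposition.** For `n ≥ 3` and a word `w` on `{a ≺ b}` (here `a = false`,
`b = true`), there is a regular sequence on `[n]` whose restriction to `{1,2}` is
order equivalent to `w` iff `w` is balanced. -/
theorem exists_regularSeq_iff_balanced (n : ℕ) (hn : 3 ≤ n) (w : List Bool) :
    (∃ ν : List ℕ, IsRegularSeq n ν ∧
        OrdEquiv (ν.filter (· ∈ ({1, 2} : Finset ℕ))) w) ↔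
      BalancedOn false true w := by
  constructor
  · rintro ⟨ν, ⟨hn3, hmem, hpairs⟩, hOE12⟩
    have hsub : ∀ x y : ℕ, 1 ≤ x → x ≤ n → 1 ≤ y → y ≤ n →
        ({x, y} : Finset ℕ) ⊆ Finset.Icc 1 n := by
      intro x y h1 h2 h3 h4 z hz
      simp only [Finset.mem_insert, Finset.mem_singleton] at hz
      rcases hz with rfl | rfl <;> simp [Finset.mem_Icc] <;> omega
    have hcard : ∀ x y : ℕ, x ≠ y → ({x, y} : Finset ℕ).card = 2 := by
      intro x y hxy
      rw [Finset.card_insert_of_notMem (by simpa using hxy), Finset.card_singleton]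
    have hsub12 := hsub 1 2 (by omega) (by omega) (by omega) (by omega)
    have hsub13 := hsub 1 3 (by omega) (by omega) (by omega) (by omega)
    have hsub23 := hsub 2 3 (by omega) (by omega) (by omega) (by omega)
    have hOE13 : OrdEquiv (ν.filter (· ∈ ({1, 3} : Finset ℕ))) w :=
      ordEquiv_trans_s10 (hpairs {1, 3} {1, 2} hsub13 hsub12
        (hcard 1 3 (by omega)) (hcard 1 2 (by omega))) hOE12
    have hOE23 : OrdEquiv (ν.filter (· ∈ ({2, 3} : Finset ℕ))) w :=
      ordEquiv_trans_s10 (hpairs {2, 3} {1, 2} hsub23 hsub12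
        (hcard 2 3 (by omega)) (hcard 1 2 (by omega))) hOE12
    -- equal letter counts
    have hL : ∀ x y : ℕ, x ≠ y →
        (ν.filter (· ∈ ({x, y} : Finset ℕ))).length = ν.count x + ν.count y := by
      intro x y hxy
      exact length_filter_pair hxy _ (fun z => by simp) ν
    have hlen1213 : (ν.filter (· ∈ ({1, 2} : Finset ℕ))).length
        = (ν.filter (· ∈ ({1, 3} : Finset ℕ))).length := by
      obtain ⟨h, -⟩ := hpairs {1, 2} {1, 3} hsub12 hsub13 (hcard 1 2 (by omega))
        (hcard 1 3 (by omega))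
      exact h
    have hlen1223 : (ν.filter (· ∈ ({1, 2} : Finset ℕ))).length
        = (ν.filter (· ∈ ({2, 3} : Finset ℕ))).length := by
      obtain ⟨h, -⟩ := hpairs {1, 2} {2, 3} hsub12 hsub23 (hcard 1 2 (by omega))
        (hcard 2 3 (by omega))
      exact h
    have hc23 : ν.count 2 = ν.count 3 := by
      have h1 := hL 1 2 (by omega); have h2 := hL 1 3 (by omega)
      rw [h1, h2] at hlen1213; omega
    have hc13 : ν.count 1 = ν.count 3 := by
      have h1 := hL 1 2 (by omega); have h2 := hL 2 3 (by omega)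
      rw [h1, h2] at hlen1223; omega
    by_cases hm : ν.count 1 = 0
    · -- degenerate: everything empty
      have : (ν.filter (· ∈ ({1, 2} : Finset ℕ))).length = 0 := by
        rw [hL 1 2 (by omega)]; omega
      obtain ⟨hl, -⟩ := hOE12
      have hw0 : w.length = 0 := by rw [← hl, this]
      rw [List.length_eq_zero_iff.mp hw0]
      exact BalancedOn.nil
    · have key : ∀ x y : ℕ, x < y → 0 < ν.count x → 0 < ν.count y →
          OrdEquiv (ν.filter (· ∈ ({x, y} : Finset ℕ))) w →
          (w.count false = ν.count x ∧ w.count true = ν.count y) ∧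
          (∀ i j : ℕ, (RelW w false i true j ↔ RelW ν x i y j) ∧
            (RelW w true i false j ↔ RelW ν y i x j)) := by
        intro x y hxy hcx hcy hOE
        set u := ν.filter (· ∈ ({x, y} : Finset ℕ)) with hu
        have hmemu : ∀ z ∈ u, z = x ∨ z = y := by
          intro z hz
          have := List.of_mem_filter hz
          simpa using this
        have hxu : x ∈ u := by
          apply List.count_pos_iff.mp
          rw [hu, List.count_filter (by simp)]
          exact hcx
        have hyu : y ∈ u := by
          apply List.count_pos_iff.mp
          rw [hu, List.count_filter (by simp)]
          exact hcy
        have hshape := eq_map_of_ordEquiv hxy hmemu hxu hyu hOE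
        constructor
        · have hcm := count_map_shape (Nat.ne_of_lt hxy) u hmemu
          rw [← hshape] at hcm
          rw [hcm.1, hcm.2, hu, List.count_filter (by simp), List.count_filter (by simp)]
          exact ⟨rfl, rfl⟩
        · intro i j
          have T := relW_transfer hxy hmemu hshape i j
          have F1 := relW_filter ν (fun z => decide (z ∈ ({x, y} : Finset ℕ)))
            (x := x) (y := y) (by simp) (by simp) i j
          have F2 := relW_filter ν (fun z => decide (z ∈ ({x, y} : Finset ℕ)))
            (x := y) (y := x) (by simp) (by simp) i j
          exact ⟨T.1.trans F1, T.2.trans F2⟩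
      have hc1 : 0 < ν.count 1 := Nat.pos_of_ne_zero hm
      have hc2 : 0 < ν.count 2 := by omega
      have hc3 : 0 < ν.count 3 := by omega
      obtain ⟨hw12, t12⟩ := key 1 2 (by omega) hc1 hc2 hOE12
      obtain ⟨-, t13⟩ := key 1 3 (by omega) hc1 hc3 hOE13
      obtain ⟨-, t23⟩ := key 2 3 (by omega) hc2 hc3 hOE23
      have hcnt : w.count false = w.count true := by
        rw [hw12.1, hw12.2]; omega
      have hno : ∀ a b : Bool, a ≠ b →
          ¬ ∃ i j k, RelW w a i b j ∧ RelW w a j b k ∧ RelW w b k a i := by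
        rintro a b hab ⟨i, j, k, R1, R2, R3⟩
        rcases a <;> rcases b
        · exact hab rfl
        · -- a = false, b = true
          have r1 : RelW ν 1 i 2 j := (t12 i j).1.mp R1
          have r2 : RelW ν 2 j 3 k := (t23 j k).1.mp R2
          have r3 : RelW ν 3 k 1 i := (t13 k i).2.mp R3
          exact relW_asymm (relW_trans r1 r2) r3
        · -- a = true, b = false
          have r1 : RelW ν 3 i 2 j := (t23 i j).2.mp R1
          have r2 : RelW ν 2 j 1 k := (t12 j k).2.mp R2
          have r3 : RelW ν 1 k 3 i := (t13 k i).1.mp R3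
          exact relW_asymm (relW_trans r1 r2) r3
        · exact hab rfl
      exact core_balanced w.length w le_rfl hcnt hno
  · intro hbal
    obtain ⟨ν, hνmem, hν⟩ := exists_nu n w hbal
    have hfilt : ∀ X : Finset ℕ, X ⊆ Finset.Icc 1 n → X.card = 2 → ∃ x y : ℕ, x < y ∧
        ν.filter (· ∈ X) = w.map (fun b => bif b then y else x) := by
      intro X hX hc
      obtain ⟨x, y, hx, hxy, hy, hXc⟩ := pair_normalize X hX hc
      refine ⟨x, y, hxy, ?_⟩
      exact hν _ x y hx hxy hy (fun z h1 h2 => by simpa using hXc z)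
    refine ⟨ν, ⟨hn, hνmem, ?_⟩, ?_⟩
    · intro X Y hX hY hcX hcY
      obtain ⟨x, y, hxy, hfX⟩ := hfilt X hX hcX
      obtain ⟨x', y', hxy', hfY⟩ := hfilt Y hY hcY
      rw [hfX, hfY]
      apply ordEquiv_map
      intro a b
      rcases a <;> rcases b <;> simp only [Bool.cond_false, Bool.cond_true] <;> omega
    · obtain ⟨x, y, hxy, hfX⟩ := hfilt {1, 2} (by
        intro z hz
        simp only [Finset.mem_insert, Finset.mem_singleton] at hz
        rcases hz with rfl | rfl <;> simp [Finset.mem_Icc] <;> omega) (by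
        rw [Finset.card_insert_of_notMem (by simp), Finset.card_singleton])
      rw [hfX]
      have h := ordEquiv_map (w := w) (fun b => bif b then y else x) (fun b : Bool => b)
        (by intro a b; rcases a <;> rcases b <;>
          simp only [Bool.cond_false, Bool.cond_true] <;>
          first
            | (constructor <;> intro h <;> [skip; omega] <;> exact absurd h (by decide))
            | (constructor <;> intro h <;> first | omega | exact absurd h (by decide) | decide))
      rwa [show w.map (fun b : Bool => b) = w from List.map_id' w] at h

end
end
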